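/- arXiv:2006.14450 — 4 statements merged into one kernel-verified Lean document; each statement's English description precedes it below -/
import Mathlib

section
/- Let the training data satisfy ‖x_i‖₂ = 1 for i = 1,…,n, and let (a(t), B(t)) be a differentiable solution of the GD-conventional flow. Then for every j ∈ {1,…,m} and every t, the inner-layer velocity satisfies ‖ḃ_j(t)‖₂ ≤ √(ĤR_n(a(t), B(t))) · |a_j(t)|, where ĤR_n denotes the empirical risk. -/
open MeasureTheory Real Finset
open scoped BigOperators ENNReal RealInnerProductSpace NNReal

noncomputable section

/-- ReLU activation. -/
def relu (t : ℝ) : ℝ := max t 0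

/-- σ′(t) = 1_{t>0}. -/
def reluD (t : ℝ) : ℝ := if 0 < t then 1 else 0

/-- Gaussian measure on `EuclideanSpace ℝ (Fin d)` with i.i.d. `N(0, v)` coordinates. -/
def gaussianPi (d : ℕ) (v : ℝ≥0) : Measure (EuclideanSpace ℝ (Fin d)) :=
  Measure.map (MeasurableEquiv.toLp 2 (Fin d → ℝ))
    (Measure.pi fun _ : Fin d => ProbabilityTheory.gaussianReal 0 v)

instance (d : ℕ) (v : ℝ≥0) : IsProbabilityMeasure (gaussianPi d v) :=
  Measure.isProbabilityMeasure_map (MeasurableEquiv.measurable _).aemeasurable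

/-- The uniform probability distribution π₀ on the unit sphere `S^{d-1}`,
realized as the pushforward of the standard Gaussian under `x ↦ x / ‖x‖`. -/
def unifSphere (d : ℕ) : Measure (EuclideanSpace ℝ (Fin d)) :=
  Measure.map (fun x => ‖x‖⁻¹ • x) (gaussianPi d 1)

/-- Initialization measure for `B(0)`: rows i.i.d. `N(0, I_d / d)`. -/
def initMeasure (d m : ℕ) : Measure (Fin m → EuclideanSpace ℝ (Fin d)) :=
  Measure.pi fun _ : Fin m => gaussianPi d (1 / d : ℝ≥0)

/-- Two-layer network under conventional scaling. -/
def fnet {d m : ℕ} (a : Fin m → ℝ) (B : Fin m → EuclideanSpace ℝ (Fin d))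
    (x : EuclideanSpace ℝ (Fin d)) : ℝ :=
  ∑ j, a j * relu ⟪B j, x⟫

/-- Empirical risk. -/
def empRisk {d m n : ℕ} (X : Fin n → EuclideanSpace ℝ (Fin d)) (y : Fin n → ℝ)
    (a : Fin m → ℝ) (B : Fin m → EuclideanSpace ℝ (Fin d)) : ℝ :=
  (1 / n) * ∑ i, (fnet a B (X i) - y i) ^ 2

/-- GD-conventional flow. -/
def IsGDFlow {d m n : ℕ} (X : Fin n → EuclideanSpace ℝ (Fin d)) (y : Fin n → ℝ)
    (a : ℝ → Fin m → ℝ) (B : ℝ → Fin m → EuclideanSpace ℝ (Fin d)) : Prop :=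
  ∀ t : ℝ, ∀ j : Fin m,
    HasDerivAt (fun s => a s j)
      (-(1 / n : ℝ) * ∑ i, (fnet (a t) (B t) (X i) - y i) * relu ⟪B t j, X i⟫) t ∧
    HasDerivAt (fun s => B s j)
      ((-(1 / n : ℝ)) • ∑ i, ((fnet (a t) (B t) (X i) - y i) * a t j
          * reluD ⟪B t j, X i⟫) • X i) t

/-- The Gram matrix K. -/
def gramMatrix {d n : ℕ} (X : Fin n → EuclideanSpace ℝ (Fin d)) :
    Matrix (Fin n) (Fin n) ℝ :=
  Matrix.of fun i j => (1 / n : ℝ) *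
    ∫ b, relu ⟪X i, b⟫ * relu ⟪X j, b⟫ ∂(unifSphere d)


/-- along the GD-conventional flow, the inner-layer velocity obeys
`‖ḃ_j(t)‖ ≤ √(R̂_n(a(t),B(t))) |a_j(t)|`. -/
theorem inner_layer_speed_bound (d m n : ℕ)
    (X : Fin n → EuclideanSpace ℝ (Fin d)) (y : Fin n → ℝ)
    (hX : ∀ i, ‖X i‖ = 1)
    (a : ℝ → Fin m → ℝ) (B : ℝ → Fin m → EuclideanSpace ℝ (Fin d))
    (hflow : IsGDFlow X y a B) (j : Fin m) (t : ℝ) :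
    ∀ v : EuclideanSpace ℝ (Fin d), HasDerivAt (fun s => B s j) v t →
      ‖v‖ ≤ Real.sqrt (empRisk X y (a t) (B t)) * |a t j| := by
  intro v hv
  have h := (hflow t j).2
  have hveq := hv.unique h
  subst hveq
  set r : Fin n → ℝ := fun i => fnet (a t) (B t) (X i) - y i with hr
  have h1 : ‖(-(1 / n : ℝ)) • ∑ i, (r i * a t j * reluD ⟪B t j, X i⟫) • X i‖
      ≤ (1 / n : ℝ) * ∑ i, |r i| * |a t j| := by
    have habs : |(-(1 / n : ℝ))| = (1 / n : ℝ) := by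
      rw [abs_neg, abs_of_nonneg]; positivity
    rw [norm_smul, Real.norm_eq_abs, habs]

    gcongr
    calc ‖∑ i, (r i * a t j * reluD ⟪B t j, X i⟫) • X i‖
        ≤ ∑ i, ‖(r i * a t j * reluD ⟪B t j, X i⟫) • X i‖ := norm_sum_le _ _
      _ ≤ ∑ i, |r i| * |a t j| := by
          refine Finset.sum_le_sum fun i _ => ?_
          rw [norm_smul, hX i, mul_one, Real.norm_eq_abs, abs_mul, abs_mul]
          have : |reluD ⟪B t j, X i⟫| ≤ 1 := by
            unfold reluD; split <;> simp
          calc |r i| * |a t j| * |reluD ⟪B t j, X i⟫| ≤ |r i| * |a t j| * 1 := by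
                gcongr
            _ = |r i| * |a t j| := mul_one _
  refine h1.trans ?_
  rw [← Finset.sum_mul, ← mul_assoc]
  gcongr ?_ * |a t j|
  have hcs : (∑ i, |r i|) ^ 2 ≤ (n : ℝ) * ∑ i, (r i) ^ 2 := by
    have := sq_sum_le_card_mul_sum_sq (s := Finset.univ) (f := fun i => |r i|)
    simpa [sq_abs] using this
  rw [empRisk]
  rcases Nat.eq_zero_or_pos n with hn | hn
  · subst hn; simp
  have hnpos : (0 : ℝ) < n := by exact_mod_cast hn
  rw [show (fnet (a t) (B t) = fun x => fnet (a t) (B t) x) from rfl]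
  have hx0 : (0 : ℝ) ≤ (1 / n : ℝ) * ∑ i, |r i| := by positivity
  apply Real.le_sqrt_of_sq_le
  have : ((1 / n : ℝ) * ∑ i, |r i|) ^ 2 = (1/n) * (1/n) * (∑ i, |r i|)^2 := by ring
  rw [this]
  calc (1/(n:ℝ)) * (1/n) * (∑ i, |r i|)^2 ≤ (1/n) * (1/n) * ((n:ℝ) * ∑ i, (r i)^2) := by
        gcongr
    _ = (1/n) * ∑ i, (r i)^2 := by field_simp
end
end

section
/- Let the training data satisfy ‖x_i‖₂ = 1 for i = 1,…,n, and let (a(t), B(t)) be a differentiable solution of the GD-conventional flow on [0, ∞) with a_j(0) = 0 for all j. Suppose there exist μ > 0 and M > 0 such that ĤR_n(a(t), B(t)) ≤ e^{−μt} ĤR_n(a(0), B(0)) and ‖b_j(t)‖₂ ≤ M for all t ≥ 0 and all j. Then for every j and every t ≥ 0, |a_j(t)| ≤ (2M/μ) √(ĤR_n(a(0), B(0))) and ‖ḃ_j(t)‖₂ ≤ (2M/μ) ĤR_n(a(0), B(0)) e^{−μt/2}; in particular the inner-layer velocities are of order 1/μ uniformly in time. -/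
open MeasureTheory Real Finset
open scoped BigOperators ENNReal RealInnerProductSpace NNReal

noncomputable section

/-- GD-conventional flow on `[0,∞)` (one-sided derivatives at the boundary). -/
def IsGDFlowOn {d m n : ℕ} (X : Fin n → EuclideanSpace ℝ (Fin d)) (y : Fin n → ℝ)
    (a : ℝ → Fin m → ℝ) (B : ℝ → Fin m → EuclideanSpace ℝ (Fin d)) : Prop :=
  ∀ t ∈ Set.Ici (0 : ℝ), ∀ j : Fin m,
    HasDerivWithinAt (fun s => a s j)
      (-(1 / n : ℝ) * ∑ i, (fnet (a t) (B t) (X i) - y i) * relu ⟪B t j, X i⟫)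
      (Set.Ici 0) t ∧
    HasDerivWithinAt (fun s => B s j)
      ((-(1 / n : ℝ)) • ∑ i, ((fnet (a t) (B t) (X i) - y i) * a t j
          * reluD ⟪B t j, X i⟫) • X i) (Set.Ici 0) t

private lemma avg_abs_le_sqrt {n : ℕ} (r : Fin n → ℝ) :
    (1 / n : ℝ) * ∑ i, |r i| ≤ Real.sqrt ((1 / n : ℝ) * ∑ i, r i ^ 2) := by
  rcases Nat.eq_zero_or_pos n with h | h
  · subst h; simp [Real.sqrt_nonneg]
  · have hn : (0:ℝ) < n := by exact_mod_cast h
    rw [← Real.sqrt_sq (by positivity : (0:ℝ) ≤ (1/(n:ℝ)) * ∑ i, |r i|)]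
    apply Real.sqrt_le_sqrt
    have h1 : (∑ i, |r i|) ^ 2 ≤ (n:ℝ) * ∑ i, |r i| ^ 2 := by
      simpa using sq_sum_le_card_mul_sum_sq (s := (univ : Finset (Fin n)))
        (f := fun i => |r i|)
    have h2 : ∑ i, |r i| ^ 2 = ∑ i, r i ^ 2 := by
      simp [sq_abs]
    calc ((1/(n:ℝ)) * ∑ i, |r i|) ^ 2 = (1/(n:ℝ))^2 * (∑ i, |r i|)^2 := by ring
    _ ≤ (1/(n:ℝ))^2 * ((n:ℝ) * ∑ i, |r i| ^ 2) := by
        apply mul_le_mul_of_nonneg_left h1 (by positivity)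
    _ = (1/(n:ℝ)) * ∑ i, r i ^ 2 := by rw [h2]; field_simp

/-- under exponential decay of the empirical risk and bounded inner
layer, starting from `a(0) = 0`, the outer coefficients stay `O(M/μ)` and the
inner-layer velocities are `O(M/μ) e^{-μt/2}`, uniformly in time. -/
theorem quenched_dynamics_bounds (d m n : ℕ)
    (X : Fin n → EuclideanSpace ℝ (Fin d)) (y : Fin n → ℝ)
    (hX : ∀ i, ‖X i‖ = 1)
    (a : ℝ → Fin m → ℝ) (B : ℝ → Fin m → EuclideanSpace ℝ (Fin d))
    (hflow : IsGDFlowOn X y a B) (ha0 : a 0 = 0)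
    (μ M : ℝ) (hμ : 0 < μ) (hM : 0 < M)
    (hdecay : ∀ t, 0 ≤ t →
      empRisk X y (a t) (B t) ≤
        Real.exp (-(μ * t)) * empRisk X y (a 0) (B 0))
    (hbdd : ∀ t, 0 ≤ t → ∀ j : Fin m, ‖B t j‖ ≤ M)
    (j : Fin m) (t : ℝ) (ht : 0 ≤ t) :
    |a t j| ≤ (2 * M / μ) * Real.sqrt (empRisk X y (a 0) (B 0)) ∧
      ∀ v : EuclideanSpace ℝ (Fin d),
        HasDerivWithinAt (fun s => B s j) v (Set.Ici 0) t →
          ‖v‖ ≤ (2 * M / μ) * empRisk X y (a 0) (B 0) *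
            Real.exp (-(μ * t / 2)) := by
  set R0 : ℝ := empRisk X y (a 0) (B 0) with hR0def
  have hR0 : 0 ≤ R0 := by
    rw [hR0def]; unfold empRisk; positivity
  -- key: average of absolute residuals is bounded
  have key : ∀ s, 0 ≤ s →
      (1 / (n:ℝ)) * ∑ i, |fnet (a s) (B s) (X i) - y i| ≤
        Real.sqrt R0 * Real.exp (-(μ * s / 2)) := by
    intro s hs
    calc (1 / (n:ℝ)) * ∑ i, |fnet (a s) (B s) (X i) - y i|
        ≤ Real.sqrt ((1 / (n:ℝ)) * ∑ i, (fnet (a s) (B s) (X i) - y i) ^ 2) :=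
          avg_abs_le_sqrt _
      _ = Real.sqrt (empRisk X y (a s) (B s)) := rfl
      _ ≤ Real.sqrt (Real.exp (-(μ * s)) * R0) :=
          Real.sqrt_le_sqrt (hdecay s hs)
      _ = Real.sqrt R0 * Real.exp (-(μ * s / 2)) := by
          rw [Real.sqrt_mul (Real.exp_nonneg _), ← Real.exp_half,
            show -(μ * s) / 2 = -(μ * s / 2) by ring]
          ring
  -- the outer derivative expression
  set φ : ℝ → ℝ := fun s =>
    -(1 / n : ℝ) * ∑ i, (fnet (a s) (B s) (X i) - y i) * relu ⟪B s j, X i⟫ with hφ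
  have hφbound : ∀ s, 0 ≤ s → |φ s| ≤ M * Real.sqrt R0 * Real.exp (-(μ * s / 2)) := by
    intro s hs
    have hterm : ∀ i, |(fnet (a s) (B s) (X i) - y i) * relu ⟪B s j, X i⟫| ≤
        |fnet (a s) (B s) (X i) - y i| * M := by
      intro i
      rw [abs_mul]
      apply mul_le_mul_of_nonneg_left _ (abs_nonneg _)
      have h1 : relu ⟪B s j, X i⟫ ≤ M := by
        calc relu ⟪B s j, X i⟫ ≤ |⟪B s j, X i⟫| := by
              exact max_le (le_abs_self _) (abs_nonneg _)
          _ ≤ ‖B s j‖ * ‖X i‖ := abs_real_inner_le_norm _ _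
          _ = ‖B s j‖ := by rw [hX i, mul_one]
          _ ≤ M := hbdd s hs j
      have h2 : 0 ≤ relu ⟪B s j, X i⟫ := le_max_right _ _
      rwa [abs_of_nonneg h2]
    have hn : (0:ℝ) ≤ 1 / n := by positivity
    calc |φ s| = (1 / n : ℝ) * |∑ i, (fnet (a s) (B s) (X i) - y i) * relu ⟪B s j, X i⟫| := by
          rw [hφ]; simp [abs_mul, abs_of_nonneg hn]
      _ ≤ (1 / n : ℝ) * ∑ i, |(fnet (a s) (B s) (X i) - y i) * relu ⟪B s j, X i⟫| := by
          apply mul_le_mul_of_nonneg_left (Finset.abs_sum_le_sum_abs _ _) hn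
      _ ≤ (1 / n : ℝ) * ∑ i, |fnet (a s) (B s) (X i) - y i| * M := by
          apply mul_le_mul_of_nonneg_left (Finset.sum_le_sum fun i _ => hterm i) hn
      _ = M * ((1 / n : ℝ) * ∑ i, |fnet (a s) (B s) (X i) - y i|) := by
          rw [← Finset.sum_mul]; ring
      _ ≤ M * (Real.sqrt R0 * Real.exp (-(μ * s / 2))) := by
          apply mul_le_mul_of_nonneg_left (key s hs) hM.le
      _ = M * Real.sqrt R0 * Real.exp (-(μ * s / 2)) := by ring
  -- the comparison function
  set Bf : ℝ → ℝ := fun s => (2 * M / μ) * Real.sqrt R0 * (1 - Real.exp (-(μ * s / 2)))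
    with hBf
  have hBf' : ∀ x : ℝ, HasDerivAt Bf (M * Real.sqrt R0 * Real.exp (-(μ * x / 2))) x := by
    intro x
    have h1 : HasDerivAt (fun s : ℝ => -(μ * s / 2)) (-(μ / 2)) x := by
      have := (((hasDerivAt_id x).const_mul μ).div_const 2).neg
      exact this.congr_deriv (by ring)
    have h2 := h1.exp
    have h3 := (h2.const_sub 1).const_mul ((2 * M / μ) * Real.sqrt R0)
    refine h3.congr_deriv ?_
    field_simp
  have habound : ∀ u, 0 ≤ u → |a u j| ≤ Bf u := by
    intro u hu
    have hcont : ContinuousOn (fun s => a s j) (Set.Icc 0 u) := by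
      intro s hs
      exact ((hflow s hs.1 j).1.continuousWithinAt).mono Set.Icc_subset_Ici_self
    have hder : ∀ x ∈ Set.Ico (0:ℝ) u,
        HasDerivWithinAt (fun s => a s j) (φ x) (Set.Ici x) x := by
      intro x hx
      exact (hflow x hx.1 j).1.mono (Set.Ici_subset_Ici.mpr hx.1)
    have h0 : ‖a 0 j‖ ≤ Bf 0 := by
      rw [ha0]; simp [hBf]
    have := image_norm_le_of_norm_deriv_right_le_deriv_boundary hcont hder h0
      hBf' (fun x hx => by
        rw [Real.norm_eq_abs]; exact hφbound x hx.1) (Set.right_mem_Icc.mpr hu)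
    simpa using this
  have hexp_le : ∀ u : ℝ, Bf u ≤ (2 * M / μ) * Real.sqrt R0 := by
    intro u
    rw [hBf]
    have h1 : (1 : ℝ) - Real.exp (-(μ * u / 2)) ≤ 1 := by
      have := Real.exp_nonneg (-(μ * u / 2)); linarith
    have h2 : (0:ℝ) ≤ (2 * M / μ) * Real.sqrt R0 := by positivity
    calc (2 * M / μ) * Real.sqrt R0 * (1 - Real.exp (-(μ * u / 2)))
        ≤ (2 * M / μ) * Real.sqrt R0 * 1 := mul_le_mul_of_nonneg_left h1 h2
      _ = (2 * M / μ) * Real.sqrt R0 := mul_one _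
  have haj : |a t j| ≤ (2 * M / μ) * Real.sqrt R0 := (habound t ht).trans (hexp_le t)
  refine ⟨haj, ?_⟩
  intro v hv
  have hflow2 := (hflow t ht j).2
  have hveq : v = (-(1 / n : ℝ)) • ∑ i, ((fnet (a t) (B t) (X i) - y i) * a t j
      * reluD ⟪B t j, X i⟫) • X i :=
    (uniqueDiffOn_Ici (0:ℝ) t ht).eq_deriv _ hv hflow2
  rw [hveq]
  have hn : (0:ℝ) ≤ 1 / n := by positivity
  calc ‖(-(1 / n : ℝ)) • ∑ i, ((fnet (a t) (B t) (X i) - y i) * a t j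
          * reluD ⟪B t j, X i⟫) • X i‖
      = (1 / n : ℝ) * ‖∑ i, ((fnet (a t) (B t) (X i) - y i) * a t j
          * reluD ⟪B t j, X i⟫) • X i‖ := by
        rw [norm_smul, Real.norm_eq_abs, abs_neg, abs_of_nonneg hn]
    _ ≤ (1 / n : ℝ) * ∑ i, ‖((fnet (a t) (B t) (X i) - y i) * a t j
          * reluD ⟪B t j, X i⟫) • X i‖ :=
        mul_le_mul_of_nonneg_left (norm_sum_le _ _) hn
    _ ≤ (1 / n : ℝ) * ∑ i, |fnet (a t) (B t) (X i) - y i| * |a t j| := by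
        apply mul_le_mul_of_nonneg_left _ hn
        apply Finset.sum_le_sum
        intro i _
        rw [norm_smul, Real.norm_eq_abs, hX i, mul_one, abs_mul, abs_mul]
        have hrd : |reluD ⟪B t j, X i⟫| ≤ 1 := by
          unfold reluD; split <;> simp
        calc |fnet (a t) (B t) (X i) - y i| * |a t j| * |reluD ⟪B t j, X i⟫|
            ≤ |fnet (a t) (B t) (X i) - y i| * |a t j| * 1 :=
              mul_le_mul_of_nonneg_left hrd (by positivity)
          _ = |fnet (a t) (B t) (X i) - y i| * |a t j| := mul_one _
    _ = |a t j| * ((1 / n : ℝ) * ∑ i, |fnet (a t) (B t) (X i) - y i|) := by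
        rw [← Finset.sum_mul]; ring
    _ ≤ ((2 * M / μ) * Real.sqrt R0) * (Real.sqrt R0 * Real.exp (-(μ * t / 2))) := by
        apply mul_le_mul haj (key t ht) (by positivity) (by positivity)
    _ = (2 * M / μ) * (Real.sqrt R0 * Real.sqrt R0) * Real.exp (-(μ * t / 2)) := by ring
    _ = (2 * M / μ) * empRisk X y (a 0) (B 0) * Real.exp (-(μ * t / 2)) := by
        rw [Real.mul_self_sqrt hR0]
end
end

section
/- Let (a(t), B(t)) be a differentiable solution of the GD-MF flow on ℝ for training data (x_i, y_i), i = 1,…,n. Define â(s) := a(ms)/√m and B̂(s) := B(ms)/√m. Then (â(s), B̂(s)) is a solution of the GD-conventional flow, its initial condition satisfies â(0) = a(0)/√m and B̂(0) = B(0)/√m, and for every s ∈ ℝ and every x ∈ ℝ^d the two trajectories represent the same function: Σ_{j=1}^m â_j(s) σ(b̂_j(s)ᵀx) = (1/m) Σ_{j=1}^m a_j(ms) σ(b_j(ms)ᵀx). -/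
open MeasureTheory Real Finset
open scoped BigOperators ENNReal RealInnerProductSpace NNReal

noncomputable section

/-- Two-layer network under mean-field scaling. -/
def fnetMF {d m : ℕ} (a : Fin m → ℝ) (B : Fin m → EuclideanSpace ℝ (Fin d))
    (x : EuclideanSpace ℝ (Fin d)) : ℝ :=
  (1 / m : ℝ) * ∑ j, a j * relu ⟪B j, x⟫

/-- GD-MF flow. -/
def IsMFFlow {d m n : ℕ} (X : Fin n → EuclideanSpace ℝ (Fin d)) (y : Fin n → ℝ)
    (a : ℝ → Fin m → ℝ) (B : ℝ → Fin m → EuclideanSpace ℝ (Fin d)) : Prop :=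
  ∀ t : ℝ, ∀ j : Fin m,
    HasDerivAt (fun s => a s j)
      (-(1 / (m * n) : ℝ) *
        ∑ i, (fnetMF (a t) (B t) (X i) - y i) * relu ⟪B t j, X i⟫) t ∧
    HasDerivAt (fun s => B s j)
      ((-(1 / (m * n) : ℝ)) • ∑ i, ((fnetMF (a t) (B t) (X i) - y i) * a t j
          * reluD ⟪B t j, X i⟫) • X i) t

/-- rescaling a GD-MF trajectory by `â(s) = a(ms)/√m`,
`B̂(s) = B(ms)/√m` yields a GD-conventional trajectory representing the same
function. -/
theorem mf_to_conventional (d m n : ℕ) (hm : 1 ≤ m) (hn : 1 ≤ n)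
    (X : Fin n → EuclideanSpace ℝ (Fin d)) (y : Fin n → ℝ)
    (a : ℝ → Fin m → ℝ) (B : ℝ → Fin m → EuclideanSpace ℝ (Fin d))
    (hflow : IsMFFlow X y a B) :
    IsGDFlow X y (fun s j => a (m * s) j / Real.sqrt m)
        (fun s j => (Real.sqrt m)⁻¹ • B (m * s) j) ∧
      (∀ j : Fin m,
        (fun s (j : Fin m) => a (m * s) j / Real.sqrt m) 0 j =
            a 0 j / Real.sqrt m ∧
          (fun s (j : Fin m) => (Real.sqrt m)⁻¹ • B (m * s) j) 0 j =
            (Real.sqrt m)⁻¹ • B 0 j) ∧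
      ∀ (s : ℝ) (x : EuclideanSpace ℝ (Fin d)),
        fnet (fun j => a (m * s) j / Real.sqrt m)
            (fun j => (Real.sqrt m)⁻¹ • B (m * s) j) x =
          fnetMF (a (m * s)) (B (m * s)) x := by
  have hm0 : (0:ℝ) < m := by exact_mod_cast Nat.lt_of_lt_of_le Nat.zero_lt_one hm
  have hn0 : (0:ℝ) < n := by exact_mod_cast hn
  have hs0 : (0:ℝ) < Real.sqrt m := Real.sqrt_pos.mpr hm0
  have hsne : (Real.sqrt m) ≠ 0 := ne_of_gt hs0
  have hsq : Real.sqrt m * Real.sqrt m = m := Real.mul_self_sqrt hm0.le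
  have hrelu : ∀ t : ℝ, relu ((Real.sqrt m)⁻¹ * t) = (Real.sqrt m)⁻¹ * relu t := by
    intro t
    simp [relu, mul_max_of_nonneg _ _ (inv_nonneg.mpr hs0.le)]
  have hreluD : ∀ t : ℝ, reluD ((Real.sqrt m)⁻¹ * t) = reluD t := by
    intro t
    have : 0 < (Real.sqrt m)⁻¹ * t ↔ 0 < t := by
      constructor
      · intro h; nlinarith [inv_pos.mpr hs0]
      · intro h; exact mul_pos (inv_pos.mpr hs0) h
    simp [reluD, this]
  have hinner : ∀ (b x : EuclideanSpace ℝ (Fin d)),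
      ⟪(Real.sqrt m)⁻¹ • b, x⟫ = (Real.sqrt m)⁻¹ * ⟪b, x⟫ :=
    fun b x => real_inner_smul_left _ _ _
  have hfnet : ∀ (t : ℝ) (x : EuclideanSpace ℝ (Fin d)),
      fnet (fun j => a t j / Real.sqrt m) (fun j => (Real.sqrt m)⁻¹ • B t j) x
        = fnetMF (a t) (B t) x := by
    intro t x
    simp only [fnet, fnetMF, hinner, hrelu]
    rw [Finset.mul_sum]
    refine Finset.sum_congr rfl fun j _ => ?_
    field_simp
    rw [Real.sq_sqrt hm0.le]; ring
  refine ⟨?_, fun j => ⟨by norm_num, by norm_num⟩, fun s x => hfnet (m * s) x⟩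
  intro s j
  have hms : HasDerivAt (fun u : ℝ => (m:ℝ) * u) (m:ℝ) s := by
    simpa using (hasDerivAt_id s).const_mul (m:ℝ)
  obtain ⟨ha, hb⟩ := hflow (m * s) j
  constructor
  · have h1 : HasDerivAt (fun u => a (m * u) j / Real.sqrt m)
        ((-(1 / (m * n) : ℝ) *
          ∑ i, (fnetMF (a (m*s)) (B (m*s)) (X i) - y i) * relu ⟪B (m*s) j, X i⟫)
          * m / Real.sqrt m) s :=
      (ha.comp s hms).div_const _
    have heq : (-(1 / n : ℝ) * ∑ i,
        (fnet (fun j => a (m * s) j / Real.sqrt m)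
          (fun j => (Real.sqrt m)⁻¹ • B (m * s) j) (X i) - y i) *
          relu ⟪(Real.sqrt m)⁻¹ • B (m * s) j, X i⟫)
        = (-(1 / (m * n) : ℝ) *
          ∑ i, (fnetMF (a (m*s)) (B (m*s)) (X i) - y i) * relu ⟪B (m*s) j, X i⟫)
          * m / Real.sqrt m := by
      simp only [hfnet, hinner, hrelu]
      rw [Finset.sum_congr rfl (fun i _ => by ring :
        ∀ i ∈ Finset.univ, (fnetMF (a (m*s)) (B (m*s)) (X i) - y i) *
          ((Real.sqrt m)⁻¹ * relu ⟪B (m*s) j, X i⟫)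
          = (Real.sqrt m)⁻¹ * ((fnetMF (a (m*s)) (B (m*s)) (X i) - y i) *
            relu ⟪B (m*s) j, X i⟫)), ← Finset.mul_sum]
      field_simp
    exact heq ▸ h1
  · have h2 : HasDerivAt (fun u => (Real.sqrt m)⁻¹ • B (m * u) j)
        ((Real.sqrt m)⁻¹ • ((m:ℝ) •
          ((-(1 / (m * n) : ℝ)) • ∑ i, ((fnetMF (a (m*s)) (B (m*s)) (X i) - y i)
            * a (m*s) j * reluD ⟪B (m*s) j, X i⟫) • X i))) s :=
      (hb.scomp s hms).const_smul (Real.sqrt m)⁻¹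
    have heq : ((-(1 / n : ℝ)) • ∑ i,
        ((fnet (fun j => a (m * s) j / Real.sqrt m)
          (fun j => (Real.sqrt m)⁻¹ • B (m * s) j) (X i) - y i) *
          (a (m * s) j / Real.sqrt m) *
          reluD ⟪(Real.sqrt m)⁻¹ • B (m * s) j, X i⟫) • X i)
        = ((Real.sqrt m)⁻¹ • ((m:ℝ) •
          ((-(1 / (m * n) : ℝ)) • ∑ i, ((fnetMF (a (m*s)) (B (m*s)) (X i) - y i)
            * a (m*s) j * reluD ⟪B (m*s) j, X i⟫) • X i))) := by
      simp only [hfnet, hinner, hreluD]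
      rw [Finset.sum_congr rfl (fun i _ => by rw [smul_smul]; congr 1; field_simp :
        ∀ i ∈ Finset.univ, ((fnetMF (a (m*s)) (B (m*s)) (X i) - y i) *
          (a (m*s) j / Real.sqrt m) * reluD ⟪B (m*s) j, X i⟫) • X i
          = (Real.sqrt m)⁻¹ • (((fnetMF (a (m*s)) (B (m*s)) (X i) - y i) *
            a (m*s) j * reluD ⟪B (m*s) j, X i⟫) • X i)), ← Finset.smul_sum]
      simp only [smul_smul]
      congr 1
      field_simp
    exact heq ▸ h2
end
end

section
/- Let (â(s), B̂(s)) be a differentiable solution of the GD-conventional flow on ℝ for training data (x_i, y_i), i = 1,…,n. Define a(t) := √m · â(t/m) and B(t) := √m · B̂(t/m). Then (a(t), B(t)) is a solution of the GD-MF flow; together with the forward direction, this establishes a one-to-one correspondence between trajectories of the GD-MF flow and trajectories of the GD-conventional flow. -/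
open MeasureTheory Real Finset
open scoped BigOperators ENNReal RealInnerProductSpace NNReal

noncomputable section

lemma relu_const_mul (c t : ℝ) (hc : 0 ≤ c) : relu (c * t) = c * relu t := by
  unfold relu
  rw [mul_max_of_nonneg _ _ hc, mul_zero]

lemma reluD_const_mul (c t : ℝ) (hc : 0 < c) : reluD (c * t) = reluD t := by
  unfold reluD
  simp [mul_pos_iff_of_pos_left, hc]

lemma fnetMF_rescale {d m : ℕ} (hm : 1 ≤ m) (a : Fin m → ℝ)
    (B : Fin m → EuclideanSpace ℝ (Fin d)) (x : EuclideanSpace ℝ (Fin d)) :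
    fnetMF (fun j => Real.sqrt m * a j) (fun j => Real.sqrt m • B j) x = fnet a B x := by
  have hm0 : (0:ℝ) < m := by exact_mod_cast hm
  unfold fnetMF fnet
  have h : ∀ j : Fin m, Real.sqrt m * a j * relu ⟪Real.sqrt m • B j, x⟫
      = (m : ℝ) * (a j * relu ⟪B j, x⟫) := by
    intro j
    rw [real_inner_smul_left, relu_const_mul _ _ (Real.sqrt_nonneg _)]
    linear_combination (a j * relu ⟪B j, x⟫) * Real.mul_self_sqrt hm0.le
  rw [Finset.sum_congr rfl (fun j _ => h j), ← Finset.mul_sum]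
  field_simp

/-- rescaling a GD-conventional trajectory by `a(t) = √m · â(t/m)`,
`B(t) = √m · B̂(t/m)` yields a GD-MF trajectory (the inverse of the
correspondence of the forward direction). -/
theorem conventional_to_mf (d m n : ℕ) (hm : 1 ≤ m) (hn : 1 ≤ n)
    (X : Fin n → EuclideanSpace ℝ (Fin d)) (y : Fin n → ℝ)
    (ahat : ℝ → Fin m → ℝ) (Bhat : ℝ → Fin m → EuclideanSpace ℝ (Fin d))
    (hflow : IsGDFlow X y ahat Bhat) :
    IsMFFlow X y (fun t j => Real.sqrt m * ahat (t / m) j)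
      (fun t j => Real.sqrt m • Bhat (t / m) j) := by
  intro t j
  have hm0 : (0:ℝ) < m := by exact_mod_cast hm
  have hms : (0:ℝ) < Real.sqrt m := Real.sqrt_pos.mpr hm0
  obtain ⟨ha, hb⟩ := hflow (t / m) j
  have hdiv : HasDerivAt (fun s : ℝ => s / m) (1 / m) t := by
    simpa using (hasDerivAt_id t).div_const (m : ℝ)
  constructor
  · have h1 := (ha.comp t hdiv).const_mul (Real.sqrt m)
    refine HasDerivAt.congr_deriv h1 (Eq.symm ?_)
    have hsum : ∀ i : Fin n,
        (fnetMF (fun j => Real.sqrt m * ahat (t/m) j)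
            (fun j => Real.sqrt m • Bhat (t/m) j) (X i) - y i)
          * relu ⟪Real.sqrt m • Bhat (t/m) j, X i⟫
        = Real.sqrt m * ((fnet (ahat (t/m)) (Bhat (t/m)) (X i) - y i)
            * relu ⟪Bhat (t/m) j, X i⟫) := by
      intro i
      rw [fnetMF_rescale hm, real_inner_smul_left,
        relu_const_mul _ _ (Real.sqrt_nonneg _)]
      ring
    simp only [hsum]
    rw [← Finset.mul_sum]
    ring
  · have h1 := ((hb.scomp t hdiv).const_smul (Real.sqrt m))
    refine HasDerivAt.congr_deriv h1 (Eq.symm ?_)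
    have hsum : ∀ i : Fin n,
        ((fnetMF (fun j => Real.sqrt m * ahat (t/m) j)
            (fun j => Real.sqrt m • Bhat (t/m) j) (X i) - y i)
          * (Real.sqrt m * ahat (t/m) j)
          * reluD ⟪Real.sqrt m • Bhat (t/m) j, X i⟫) • X i
        = Real.sqrt m • (((fnet (ahat (t/m)) (Bhat (t/m)) (X i) - y i)
            * ahat (t/m) j * reluD ⟪Bhat (t/m) j, X i⟫) • X i) := by
      intro i
      rw [fnetMF_rescale hm, real_inner_smul_left, reluD_const_mul _ _ hms,
        smul_smul]
      ring_nf
    simp only [hsum]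
    rw [← Finset.smul_sum, smul_smul, smul_smul, smul_smul]
    congr 1
    ring
end
end
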